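/- Let d ≥ 2 and let φ : ℝ^d → (0,∞) be continuous and satisfy the collision-invariance functional equation φ(p)·φ(p_*) = φ(p')·φ(p'_*) for all p, p_*, p', p'_* ∈ ℝ^d with p + p_* = p' + p'_* and |p|² + |p_*|² = |p'|² + |p'_*|². Then there exist a ∈ ℝ, b ∈ ℝ^d and c ∈ ℝ such that φ(p) = exp(a + b·p + c|p|²) for all p ∈ ℝ^d; i.e., φ is a Maxwellian. -/

import Mathlib

open MeasureTheory Metric Set


private lemma aux_additive_linear (F : ℝ → ℝ) (hF : Continuous F)
    (hadd : ∀ s t : ℝ, F (s + t) = F s + F t) : ∀ t, F t = t * F 1 := by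
  intro t
  set Fh : ℝ →+ ℝ := AddMonoidHom.mk' F hadd with hFh
  have hFc : Continuous Fh := hF
  have h2 := congrFun (AddMonoidHom.coe_toRealLinearMap Fh hFc)
  calc F t = (Fh.toRealLinearMap hFc) t := (h2 t).symm
    _ = (Fh.toRealLinearMap hFc) (t • (1:ℝ)) := by norm_num
    _ = t • ((Fh.toRealLinearMap hFc) 1) := map_smul _ _ _
    _ = t * F 1 := by rw [h2 1]; rfl


private lemma aux_core (F G : ℝ → ℝ) (hF : Continuous F) (hF0 : F 0 = 0)
    (hGodd : ∀ t : ℝ, G (-t) = - G t)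
    (hmaster : ∀ α β γ δ : ℝ, α^2 + β^2 = γ^2 + δ^2 →
      F (α + γ) + G (β + δ) = F α + F γ + G β + G δ) :
    ∀ s t : ℝ, F (s + t) = F s + F t := by
  set A : ℝ → ℝ → ℝ := fun a b => F (a + b) - F a - F b with hAdef
  have hA0 : ∀ b, A 0 b = 0 := by intro b; simp [hAdef, hF0]
  have hAsymm : ∀ a b, A a b = A b a := by
    intro a b; simp only [hAdef]; rw [add_comm a b]; ring
  have hA0' : ∀ a, A a 0 = 0 := fun a => (hAsymm a 0).trans (hA0 a)
  have hB : ∀ a b, G (a + b) - G a - G b = - A a b := by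
    intro a b
    have h1 := hmaster b a a b (by ring)
    have hc : F (a + b) = F (b + a) := by rw [add_comm]
    have hc2 : G (a + b) = G (b + a) := by rw [add_comm]
    simp only [hAdef]; linarith
  have hrel : ∀ a b, A a b = - A (b - a) a := by
    intro a b
    have h1 := hmaster a b b (-a) (by ring)
    rw [hGodd a] at h1
    have h2 : b + -a = b - a := by ring
    rw [h2] at h1
    have h3 := hB (b - a) a
    have h4 : b - a + a = b := by ring
    simp only [hAdef] at h3 ⊢
    rw [h4] at h3 ⊢
    linarith
  have hshift' : ∀ a b, A a (b - a) = - A a b := by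
    intro a b
    have h := hrel a b
    rw [hAsymm a (b - a)]
    linarith
  have hshift : ∀ a b, A a (b + a) = - A a b := by
    intro a b
    have h := hshift' a (b + a)
    rw [add_sub_cancel_right] at h
    linarith
  -- reduction step in ℤ
  have hkey : ∀ a b : ℤ, a ≠ 0 → a.natAbs ≤ b.natAbs →
      (b - a).natAbs < b.natAbs ∨ (b + a).natAbs < b.natAbs := by
    intro a b ha hab
    by_contra hcon
    push_neg at hcon
    obtain ⟨h1, h2⟩ := hcon
    have hb : b ≠ 0 := by
      intro hb0; subst hb0; simp at hab; exact ha hab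
    have e1 : (b - a).natAbs * (b + a).natAbs = ((b - a) * (b + a)).natAbs :=
      (Int.natAbs_mul _ _).symm
    have e2 : (b - a) * (b + a) = b * b - a * a := by ring
    have haa : a * a ≤ b * b := Int.natAbs_le_iff_mul_self_le.mp hab
    have hbb : b.natAbs * b.natAbs ≤ (b - a).natAbs * (b + a).natAbs :=
      Nat.mul_le_mul h1 h2
    rw [e1, e2] at hbb
    have h5 : ((b * b - a * a).natAbs : ℤ) = b * b - a * a := by
      rw [Int.natAbs_of_nonneg]; linarith
    have h6 : ((b.natAbs : ℤ)) = |b| := (Int.abs_eq_natAbs b).symm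
    have h7 : (b.natAbs : ℤ) * b.natAbs = b * b := by
      rw [h6, ← abs_mul, abs_of_nonneg (mul_self_nonneg b)]
    have h8 : (0:ℤ) < a * a := mul_self_pos.mpr ha
    have : (b.natAbs * b.natAbs : ℤ) ≤ ((b * b - a * a).natAbs : ℤ) := by
      exact_mod_cast hbb
    rw [h5, h7] at this
    linarith
  -- A vanishes on integer multiples of a common t
  have hint : ∀ n : ℕ, ∀ a b : ℤ, a.natAbs + b.natAbs = n → ∀ t : ℝ,
      A (a * t) (b * t) = 0 := by
    intro n
    induction n using Nat.strong_induction_on with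
    | _ n ih =>
      intro a b hn t
      by_cases ha : a = 0
      · subst ha; push_cast; rw [zero_mul]; exact hA0 _
      by_cases hb : b = 0
      · subst hb; push_cast; rw [zero_mul]; exact hA0' _
      rcases le_or_gt a.natAbs b.natAbs with hle | hlt
      · rcases hkey a b ha hle with hred | hred
        · have e : ((b - a : ℤ) : ℝ) * t = b * t - a * t := by push_cast; ring
          have := ih (a.natAbs + (b - a).natAbs) (by omega) a (b - a) rfl t
          rw [e] at this
          have hs := hshift' (a * t) (b * t)
          linarith
        · have e : ((b + a : ℤ) : ℝ) * t = b * t + a * t := by push_cast; ring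
          have := ih (a.natAbs + (b + a).natAbs) (by omega) a (b + a) rfl t
          rw [e] at this
          have hs := hshift (a * t) (b * t)
          linarith
      · -- symmetric: reduce a using b
        rcases hkey b a hb hlt.le with hred | hred
        · have e : ((a - b : ℤ) : ℝ) * t = a * t - b * t := by push_cast; ring
          have := ih (b.natAbs + (a - b).natAbs) (by omega) b (a - b) rfl t
          rw [e] at this
          have hs := hshift' (b * t) (a * t)
          rw [hAsymm (↑a * t) (↑b * t)]
          linarith
        · have e : ((a + b : ℤ) : ℝ) * t = a * t + b * t := by push_cast; ring
          have := ih (b.natAbs + (a + b).natAbs) (by omega) b (a + b) rfl t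
          rw [e] at this
          have hs := hshift (b * t) (a * t)
          rw [hAsymm (↑a * t) (↑b * t)]
          linarith
  -- density
  have hAzero : ∀ a b : ℝ, A a b = 0 := by
    intro a b
    by_cases ha : a = 0
    · subst ha; exact hA0 b
    have hq : ∀ q : ℚ, A a (a * q) = 0 := by
      intro q
      have hden : ((q.den : ℤ) : ℝ) ≠ 0 := by
        exact_mod_cast (Nat.cast_ne_zero (R := ℝ)).mpr q.den_nz
      have h := hint ((q.den : ℤ).natAbs + q.num.natAbs) (q.den : ℤ) q.num rfl
        (a / q.den)
      have e1 : ((q.den : ℤ) : ℝ) * (a / q.den) = a := by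
        field_simp; norm_cast
      have e2 : (q.num : ℝ) * (a / q.den) = a * q := by
        rw [Rat.cast_def]; field_simp
      rw [e1, e2] at h
      exact h
    have hdense : Dense (range fun q : ℚ => a * (q : ℝ)) := by
      have h1 : DenseRange ((↑) : ℚ → ℝ) := Rat.denseRange_cast
      have h2 : (fun q : ℚ => a * (q : ℝ)) = (fun x : ℝ => a * x) ∘ ((↑) : ℚ → ℝ) := rfl
      rw [h2]
      exact ((Homeomorph.mulLeft₀ a ha).surjective.denseRange).comp h1
        (Homeomorph.continuous _)
    have hcont : Continuous (A a) := by
      simp only [hAdef]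
      exact ((hF.comp (continuous_const.add continuous_id)).sub continuous_const).sub hF
    have heq : A a = fun _ => (0:ℝ) := by
      refine Continuous.ext_on hdense hcont continuous_const ?_
      rintro x ⟨q, rfl⟩
      exact hq q
    exact congrFun heq b
  intro s t
  have := hAzero s t
  simp only [hAdef] at this
  linarith


private lemma aux_exists_orth {d : ℕ} (hd : 2 ≤ d) (x : EuclideanSpace ℝ (Fin d)) :
    ∃ y : EuclideanSpace ℝ (Fin d), inner ℝ x y = (0:ℝ) ∧ ‖y‖ = ‖x‖ := by
  by_cases hx : x = 0
  · exact ⟨0, by simp [hx]⟩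
  set K : Submodule ℝ (EuclideanSpace ℝ (Fin d)) := ℝ ∙ x with hK
  have hrk : Module.finrank ℝ K = 1 := finrank_span_singleton hx
  have hsum := Submodule.finrank_add_finrank_orthogonal K
  have hE : Module.finrank ℝ (EuclideanSpace ℝ (Fin d)) = d := by
    simp [finrank_euclideanSpace]
  have hpos : Kᗮ ≠ ⊥ := by
    intro hbot
    rw [hbot] at hsum
    simp [hrk, hE] at hsum
    omega
  obtain ⟨v, hvK, hv0⟩ := Submodule.exists_mem_ne_zero_of_ne_bot hpos
  have hvx : inner ℝ x v = (0:ℝ) := by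
    have := (Submodule.mem_orthogonal K v).mp hvK x (Submodule.mem_span_singleton_self x)
    simpa [real_inner_comm] using this
  refine ⟨(‖x‖ / ‖v‖) • v, ?_, ?_⟩
  · rw [real_inner_smul_right, hvx, mul_zero]
  · rw [norm_smul]
    have hv : ‖v‖ ≠ 0 := norm_ne_zero_iff.mpr hv0
    simp [abs_of_nonneg (div_nonneg (norm_nonneg x) (norm_nonneg v)), div_mul_cancel₀, hv]

private lemma aux_orth {d : ℕ} (hd : 2 ≤ d) (f : EuclideanSpace ℝ (Fin d) → ℝ)
    (hcont : Continuous f)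
    (hadd : ∀ x y : EuclideanSpace ℝ (Fin d), inner ℝ x y = (0:ℝ) → f (x + y) = f x + f y) :
    ∃ (b : EuclideanSpace ℝ (Fin d)) (c : ℝ),
      ∀ p : EuclideanSpace ℝ (Fin d), f p = inner ℝ b p + c * ‖p‖ ^ 2 := by
  have hf0 : f 0 = 0 := by
    have := hadd 0 0 (by simp)
    simp at this
    linarith
  set g : EuclideanSpace ℝ (Fin d) → ℝ := fun x => (f x + f (-x)) / 2 with hgdef
  set h : EuclideanSpace ℝ (Fin d) → ℝ := fun x => (f x - f (-x)) / 2 with hhdef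
  have hfg : ∀ x, f x = g x + h x := by intro x; simp [hgdef, hhdef]; ring
  have hgcont : Continuous g := ((hcont.add (hcont.comp continuous_neg)).div_const 2)
  have hhcont : Continuous h := ((hcont.sub (hcont.comp continuous_neg)).div_const 2)
  have hgadd : ∀ x y, inner ℝ x y = (0:ℝ) → g (x + y) = g x + g y := by
    intro x y hxy
    have h1 := hadd x y hxy
    have h2 := hadd (-x) (-y) (by simpa using hxy)
    simp only [hgdef]
    rw [neg_add]
    rw [h1, h2]
    ring
  have hhadd : ∀ x y, inner ℝ x y = (0:ℝ) → h (x + y) = h x + h y := by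
    intro x y hxy
    have h1 := hadd x y hxy
    have h2 := hadd (-x) (-y) (by simpa using hxy)
    simp only [hhdef]
    rw [neg_add]
    rw [h1, h2]
    ring
  have hgeven : ∀ x, g (-x) = g x := by intro x; simp [hgdef]; ring
  have hhodd : ∀ x, h (-x) = - h x := by intro x; simp [hhdef]; ring
  have hh0 : h 0 = 0 := by simp [hhdef]
  have hg0 : g 0 = 0 := by simp [hgdef, hf0]
  -- doubling for h
  have hdouble : ∀ u, h ((2:ℝ) • u) = 2 * h u := by
    intro u
    obtain ⟨y, hy1, hy2⟩ := aux_exists_orth hd u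
    have o : inner ℝ (u + y) (u - y) = (0:ℝ) := by
      rw [inner_sub_right, inner_add_left, inner_add_left]
      rw [real_inner_self_eq_norm_sq, real_inner_self_eq_norm_sq, real_inner_comm y u, hy2]
      ring
    have e : (u + y) + (u - y) = (2:ℝ) • u := by
      rw [two_smul]; abel
    have h1 := hhadd _ _ o
    rw [e] at h1
    have h2 := hhadd u y hy1
    have h3 : h (u - y) = h u - h y := by
      have := hhadd u (-y) (by simp [inner_neg_right, hy1])
      rw [← sub_eq_add_neg] at this
      rw [this, hhodd]
      ring
    rw [h1, h2, h3]; ring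
  -- equal-norm additivity of h, and equal-norm invariance of g
  have hdecomp : ∀ x y : EuclideanSpace ℝ (Fin d), ‖x‖ = ‖y‖ →
      ∃ u v : EuclideanSpace ℝ (Fin d), inner ℝ u v = (0:ℝ) ∧ x = u + v ∧ y = u + -v ∧
        x + y = (2:ℝ) • u := by
    intro x y hxy
    refine ⟨(2:ℝ)⁻¹ • (x + y), (2:ℝ)⁻¹ • (x - y), ?_, ?_, ?_, ?_⟩
    · rw [real_inner_smul_left, real_inner_smul_right]
      have : inner ℝ (x + y) (x - y) = (0:ℝ) := by
        rw [inner_sub_right, inner_add_left, inner_add_left]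
        rw [real_inner_self_eq_norm_sq, real_inner_self_eq_norm_sq, real_inner_comm y x, hxy]
        ring
      rw [this]; ring
    · rw [← smul_add]
      have e : (x + y) + (x - y) = (2:ℝ) • x := by rw [two_smul]; abel
      rw [e, smul_smul]; norm_num
    · rw [← smul_neg, ← smul_add]
      have e : (x + y) + -(x - y) = (2:ℝ) • y := by rw [two_smul]; abel
      rw [e, smul_smul]; norm_num
    · rw [smul_smul]; norm_num
  have hEqNorm : ∀ x y : EuclideanSpace ℝ (Fin d), ‖x‖ = ‖y‖ → h (x + y) = h x + h y := by
    intro x y hxy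
    obtain ⟨u, v, huv, hx, hy, hsum⟩ := hdecomp x y hxy
    have h1 : h x = h u + h v := by rw [hx]; exact hhadd u v huv
    have h2 : h y = h u - h v := by
      rw [hy, hhadd u (-v) (by simp [inner_neg_right, huv]), hhodd]; ring
    rw [hsum, hdouble]; linarith
  have hgEqNorm : ∀ x y : EuclideanSpace ℝ (Fin d), ‖x‖ = ‖y‖ → g x = g y := by
    intro x y hxy
    obtain ⟨u, v, huv, hx, hy, _⟩ := hdecomp x y hxy
    have h1 : g x = g u + g v := by rw [hx]; exact hgadd u v huv
    have h2 : g y = g u + g v := by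
      rw [hy, hgadd u (-v) (by simp [inner_neg_right, huv]), hgeven]
    rw [h1, h2]
  -- linearity of h along orthonormal pairs
  have hdirpair : ∀ e e' : EuclideanSpace ℝ (Fin d), ‖e‖ = 1 → ‖e'‖ = 1 →
      inner ℝ e e' = (0:ℝ) → ∀ s t : ℝ, h ((s + t) • e) = h (s • e) + h (t • e) := by
    intro e e' he he' hee s t
    have horth : ∀ s t : ℝ, inner ℝ (s • e) (t • e') = (0:ℝ) := by
      intro s t
      rw [real_inner_smul_left, real_inner_smul_right, hee]; ring
    have hnorm : ∀ (s : ℝ) (w : EuclideanSpace ℝ (Fin d)), ‖w‖ = 1 → ‖s • w‖ = |s| := by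
      intro s w hw; rw [norm_smul, hw, Real.norm_eq_abs, mul_one]
    refine aux_core (fun t => h (t • e)) (fun t => h (t • e'))
      (hhcont.comp (continuous_id.smul continuous_const))
      (by simp [hh0]) (fun t => by show h ((-t) • e') = - h (t • e'); rw [neg_smul, hhodd]) ?_ s t
    intro α β γ δ hcond
    have hsq : ∀ (a b : ℝ), ‖a • e + b • e'‖ = Real.sqrt (a^2 + b^2) := by
      intro a b
      have h1 : ‖a • e + b • e'‖^2 = a^2 + b^2 := by
        rw [norm_add_sq_real, horth, hnorm a e he, hnorm b e' he']
        rw [sq_abs, sq_abs]; ring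
      rw [← h1, Real.sqrt_sq (norm_nonneg _)]
    have hnn : ‖α • e + β • e'‖ = ‖γ • e + δ • e'‖ := by
      rw [hsq, hsq, hcond]
    have h1 := hEqNorm _ _ hnn
    have e1 : (α • e + β • e') + (γ • e + δ • e') = (α + γ) • e + (β + δ) • e' := by
      rw [add_smul, add_smul]; abel
    rw [e1] at h1
    rw [hhadd _ _ (horth (α+γ) (β+δ)), hhadd _ _ (horth α β), hhadd _ _ (horth γ δ)] at h1
    linarith
  -- basis directions
  have hbig : 1 < d := hd
  set i0 : Fin d := ⟨0, by omega⟩ with hi0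
  set i1 : Fin d := ⟨1, by omega⟩ with hi1
  have hsingle_norm : ∀ i : Fin d, ‖EuclideanSpace.single i (1:ℝ)‖ = 1 := by
    intro i; rw [EuclideanSpace.norm_single]; norm_num
  have hsingle_orth : ∀ i j : Fin d, i ≠ j →
      inner ℝ (EuclideanSpace.single i (1:ℝ)) (EuclideanSpace.single j (1:ℝ)) = (0:ℝ) := by
    intro i j hij
    rw [EuclideanSpace.inner_single_left]
    simp [EuclideanSpace.single_apply, hij]
  have hdir : ∀ (i : Fin d) (t : ℝ),
      h (t • EuclideanSpace.single i (1:ℝ)) = t * h (EuclideanSpace.single i (1:ℝ)) := by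
    intro i t
    obtain ⟨j, hij⟩ : ∃ j : Fin d, i ≠ j := by
      by_cases hii : i = i0
      · exact ⟨i1, by rw [hii]; intro hc; simp [hi0, hi1, Fin.ext_iff] at hc⟩
      · exact ⟨i0, hii⟩
    have hF := hdirpair (EuclideanSpace.single i 1) (EuclideanSpace.single j 1)
      (hsingle_norm i) (hsingle_norm j) (hsingle_orth i j hij)
    have hadd' : ∀ s t : ℝ, (fun t => h (t • EuclideanSpace.single i (1:ℝ))) (s + t) =
        (fun t => h (t • EuclideanSpace.single i (1:ℝ))) s +
        (fun t => h (t • EuclideanSpace.single i (1:ℝ))) t := hF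
    have := aux_additive_linear _ (hhcont.comp (continuous_id.smul continuous_const)) hadd' t
    simpa using this
  -- h is inner with a fixed vector
  have hsumdec : ∀ x : EuclideanSpace ℝ (Fin d), ∀ s : Finset (Fin d),
      h (∑ i ∈ s, x i • EuclideanSpace.single i (1:ℝ)) =
        ∑ i ∈ s, h (x i • EuclideanSpace.single i (1:ℝ)) := by
    intro x s
    induction s using Finset.induction_on with
    | empty => simp [hh0]
    | insert _ _ hnot =>
      rename_i i s ih
      rw [Finset.sum_insert hnot, Finset.sum_insert hnot, ← ih]
      refine hhadd _ _ ?_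
      rw [real_inner_smul_left, inner_sum]
      have : ∀ j ∈ s, inner ℝ (EuclideanSpace.single i (1:ℝ))
          (x j • EuclideanSpace.single j (1:ℝ)) = (0:ℝ) := by
        intro j hj
        rw [real_inner_smul_right, hsingle_orth i j (fun hij => hnot (hij ▸ hj))]
        ring
      rw [Finset.sum_congr rfl this]
      simp
  have hxdec : ∀ x : EuclideanSpace ℝ (Fin d),
      x = ∑ i : Fin d, x i • EuclideanSpace.single i (1:ℝ) := by
    intro x
    have hsr := (EuclideanSpace.basisFun (Fin d) ℝ).sum_repr x
    simp only [EuclideanSpace.basisFun_apply, EuclideanSpace.basisFun_repr] at hsr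
    exact hsr.symm
  set b : EuclideanSpace ℝ (Fin d) :=
    ∑ i : Fin d, h (EuclideanSpace.single i (1:ℝ)) • EuclideanSpace.single i (1:ℝ) with hbdef
  have hhx : ∀ x : EuclideanSpace ℝ (Fin d), h x = inner ℝ b x := by
    intro x
    rw [hbdef, sum_inner]
    conv_lhs => rw [hxdec x]
    rw [hsumdec x Finset.univ]
    refine Finset.sum_congr rfl ?_
    intro i _
    rw [hdir i (x i), real_inner_smul_left, EuclideanSpace.inner_single_left]
    simp [mul_comm]
  -- even part
  set e₀ : EuclideanSpace ℝ (Fin d) := EuclideanSpace.single i0 1 with he₀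
  set e₁ : EuclideanSpace ℝ (Fin d) := EuclideanSpace.single i1 1 with he₁
  have hne01 : i0 ≠ i1 := by intro hc; simp [hi0, hi1, Fin.ext_iff] at hc
  set G₀ : ℝ → ℝ := fun s => g (Real.sqrt s • e₀) with hG₀def
  have hG₀nonpos : ∀ s : ℝ, s ≤ 0 → G₀ s = 0 := by
    intro s hs
    simp only [hG₀def]
    rw [Real.sqrt_eq_zero_of_nonpos hs, zero_smul]
    exact hg0
  have hnormsmul : ∀ (t : ℝ) (i : Fin d), ‖t • EuclideanSpace.single i (1:ℝ)‖ = |t| := by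
    intro t i
    rw [norm_smul, hsingle_norm, Real.norm_eq_abs, mul_one]
  have hG₀add : ∀ s t : ℝ, 0 ≤ s → 0 ≤ t → G₀ (s + t) = G₀ s + G₀ t := by
    intro s t hs ht
    have hxy : inner ℝ (Real.sqrt s • e₀) (Real.sqrt t • e₁) = (0:ℝ) := by
      rw [real_inner_smul_left, real_inner_smul_right, he₀, he₁, hsingle_orth i0 i1 hne01]
      ring
    have step1 := hgadd _ _ hxy
    have gy : g (Real.sqrt t • e₁) = g (Real.sqrt t • e₀) := by
      apply hgEqNorm
      rw [he₀, he₁, hnormsmul, hnormsmul]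
    have n1 : ‖Real.sqrt s • e₀ + Real.sqrt t • e₁‖ ^ 2 = s + t := by
      rw [norm_add_sq_real, hxy, he₀, he₁, hnormsmul, hnormsmul, sq_abs, sq_abs,
        Real.sq_sqrt hs, Real.sq_sqrt ht]
      ring
    have n2 : ‖Real.sqrt (s + t) • e₀‖ ^ 2 = s + t := by
      rw [he₀, hnormsmul, sq_abs, Real.sq_sqrt (by linarith)]
    have gxy : g (Real.sqrt s • e₀ + Real.sqrt t • e₁) = g (Real.sqrt (s + t) • e₀) := by
      apply hgEqNorm
      rw [← Real.sqrt_sq (norm_nonneg (Real.sqrt s • e₀ + Real.sqrt t • e₁)),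
        ← Real.sqrt_sq (norm_nonneg (Real.sqrt (s + t) • e₀)), n1, n2]
    simp only [hG₀def]
    rw [← gxy, step1, gy]
  set Gh : ℝ → ℝ := fun s => G₀ s - G₀ (-s) with hGhdef
  have hGhcont : Continuous Gh := by
    have hG₀cont : Continuous G₀ := hgcont.comp (Real.continuous_sqrt.smul continuous_const)
    exact hG₀cont.sub (hG₀cont.comp continuous_neg)
  have hkeymix : ∀ s t : ℝ, 0 ≤ s → t ≤ 0 → Gh (s + t) = Gh s + Gh t := by
    intro s t hs ht
    rcases le_total 0 (s + t) with hst | hst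
    · have h1 : G₀ ((s + t) + -t) = G₀ (s + t) + G₀ (-t) := hG₀add _ _ hst (by linarith)
      have e1 : (s + t) + -t = s := by ring
      rw [e1] at h1
      simp only [hGhdef]
      rw [hG₀nonpos (-s) (by linarith), hG₀nonpos t ht, hG₀nonpos (-(s+t)) (by linarith)]
      linarith
    · have h1 : G₀ (-(s + t) + s) = G₀ (-(s + t)) + G₀ s := hG₀add _ _ (by linarith) hs
      have e1 : -(s + t) + s = -t := by ring
      rw [e1] at h1
      simp only [hGhdef]
      rw [hG₀nonpos (-s) (by linarith), hG₀nonpos t ht, hG₀nonpos (s+t) hst]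
      linarith
  have hGhadd : ∀ s t : ℝ, Gh (s + t) = Gh s + Gh t := by
    intro s t
    rcases le_total 0 s with hs | hs <;> rcases le_total 0 t with ht | ht
    · simp only [hGhdef]
      rw [hG₀add s t hs ht, hG₀nonpos (-s) (by linarith), hG₀nonpos (-t) (by linarith),
        hG₀nonpos (-(s+t)) (by linarith)]
      ring
    · exact hkeymix s t hs ht
    · rw [add_comm, add_comm (Gh s)]
      exact hkeymix t s ht hs
    · simp only [hGhdef]
      have h1 : G₀ (-s + -t) = G₀ (-s) + G₀ (-t) := hG₀add _ _ (by linarith) (by linarith)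
      have e1 : -s + -t = -(s + t) := by ring
      rw [e1] at h1
      rw [hG₀nonpos s hs, hG₀nonpos t ht, hG₀nonpos (s+t) (by linarith)]
      linarith
  have hGhlin := aux_additive_linear Gh hGhcont hGhadd
  have hgx : ∀ x : EuclideanSpace ℝ (Fin d), g x = Gh 1 * ‖x‖ ^ 2 := by
    intro x
    have h1 : g x = G₀ (‖x‖ ^ 2) := by
      simp only [hG₀def]
      apply hgEqNorm
      rw [he₀, hnormsmul, Real.sqrt_sq (norm_nonneg x), abs_of_nonneg (norm_nonneg x)]
    have h2 : G₀ (‖x‖ ^ 2) = Gh (‖x‖ ^ 2) := by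
      simp only [hGhdef]
      rw [hG₀nonpos (-(‖x‖^2)) (neg_nonpos.mpr (by positivity))]
      ring
    rw [h1, h2, hGhlin (‖x‖ ^ 2)]
    ring
  refine ⟨b, Gh 1, ?_⟩
  intro p
  rw [hfg p, hhx p, hgx p]
  ring

/-- any continuous positive function on `ℝ^d`, `d ≥ 2`, satisfying the
collision-invariance functional equation is a Maxwellian. -/
theorem maxwellian_of_collision_invariant
    (d : ℕ) (hd : 2 ≤ d)
    (φ : EuclideanSpace ℝ (Fin d) → ℝ)
    (hφpos : ∀ p, 0 < φ p)
    (hφcont : Continuous φ)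
    (hcoll : ∀ p ps p' ps' : EuclideanSpace ℝ (Fin d),
      p + ps = p' + ps' → ‖p‖ ^ 2 + ‖ps‖ ^ 2 = ‖p'‖ ^ 2 + ‖ps'‖ ^ 2 →
      φ p * φ ps = φ p' * φ ps') :
    ∃ (a : ℝ) (b : EuclideanSpace ℝ (Fin d)) (c : ℝ),
      ∀ p, φ p = Real.exp (a + inner ℝ b p + c * ‖p‖ ^ 2) := by
  set ψ : EuclideanSpace ℝ (Fin d) → ℝ := fun p => Real.log (φ p) with hψdef
  have hψcont : Continuous ψ := hφcont.log (fun p => (hφpos p).ne')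
  set f : EuclideanSpace ℝ (Fin d) → ℝ := fun p => ψ p - ψ 0 with hfdef
  have hfcont : Continuous f := hψcont.sub continuous_const
  have hfadd : ∀ x y : EuclideanSpace ℝ (Fin d), inner ℝ x y = (0:ℝ) → f (x + y) = f x + f y := by
    intro x y hxy
    have hc := hcoll (x + y) 0 x y (by rw [add_zero]) (by
      rw [norm_add_sq_real, hxy, norm_zero]
      ring)
    have hlog : ψ (x + y) + ψ 0 = ψ x + ψ y := by
      simp only [hψdef]
      rw [← Real.log_mul (hφpos _).ne' (hφpos _).ne', ← Real.log_mul (hφpos _).ne' (hφpos _).ne',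
        hc]
    simp only [hfdef]
    linarith
  obtain ⟨b, c, hbc⟩ := aux_orth hd f hfcont hfadd
  refine ⟨ψ 0, b, c, ?_⟩
  intro p
  have h1 := hbc p
  simp only [hfdef] at h1
  have h2 : ψ p = ψ 0 + inner ℝ b p + c * ‖p‖ ^ 2 := by linarith
  rw [← h2]
  simp only [hψdef]
  rw [Real.exp_log (hφpos p)]
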